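/- For every j ∈ [k], every shortest (minimum-cost) path from c_j to d_j in U_int equals the horizontal canonical path Canonical(ℓ; c_j–d_j) for some ℓ ∈ [N]. -/

import Mathlib

/-- A directed path (self-avoiding walk) from `s` to `t` in the digraph with
edge relation `E`, given as the list of its vertices in order. -/
structure IsPathList {V : Type*} (E : V → V → Prop) (s t : V) (p : List V) : Prop where
  chain : p.Chain' E
  nodup : p.Nodup
  head : p.head? = some s
  last : p.getLast? = some t

/-- A shortest directed `s⇝t` path, where the length of a path is its number of vertices. -/
def IsShortestDirPath {V : Type*} (E : V → V → Prop) (s t : V) (p : List V) : Prop :=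
  IsPathList E s t p ∧ ∀ q : List V, IsPathList E s t q → p.length ≤ q.length

/-- Symmetrization of a relation: the adjacency of the undirected graph obtained by
forgetting the orientation of the edges. -/
def UAdj {V : Type*} (E : V → V → Prop) (x y : V) : Prop := E x y ∨ E y x

/-- The cost of a path: the sum of the costs of its vertices. -/
def pathCost {V : Type*} (cost : V → ℕ) (p : List V) : ℕ := (p.map cost).sum

/-- A shortest (minimum-cost) `s`–`t` path in the undirected graph obtained from `E`. -/
def IsShortestCostPath {V : Type*} (E : V → V → Prop) (cost : V → ℕ) (s t : V)
    (p : List V) : Prop :=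
  IsPathList (UAdj E) s t p ∧
    ∀ q : List V, IsPathList (UAdj E) s t q → pathCost cost p ≤ pathCost cost q

/-- The (directed) edges traversed by a path, as ordered pairs of consecutive vertices. -/
def dirEdges {V : Type*} (p : List V) : List (V × V) := p.zip p.tail

/-- Two directed paths are edge-disjoint. -/
def EdgeDisj {V : Type*} (p q : List V) : Prop := ∀ e ∈ dirEdges p, e ∉ dirEdges q

/-- The (undirected) edges traversed by a path, as unordered pairs. -/
def uEdges {V : Type*} (p : List V) : List (Sym2 V) := (dirEdges p).map fun e => s(e.1, e.2)

/-- Two undirected paths are edge-disjoint. -/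
def UEdgeDisj {V : Type*} (p q : List V) : Prop := ∀ e ∈ uEdges p, e ∉ uEdges q

/-- Two paths are vertex-disjoint. -/
def VertDisj {V : Type*} (p q : List V) : Prop := ∀ v ∈ p, v ∉ q

/-- The vertices of the intermediate graph `D_int` (also the vertex set of `U_int`):
grid vertices `w_{i,j}^{q,ℓ}` (`grid i j q ℓ`, with `q` the column and `ℓ` the row,
indices `0`-based) and terminal vertices `a i`, `b i`, `c j`, `d j`. -/
inductive DIntV (k N : ℕ) where
  | grid (i j : Fin k) (q ℓ : Fin N)
  | a (i : Fin k)
  | b (i : Fin k)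
  | c (j : Fin k)
  | d (j : Fin k)
  deriving DecidableEq, Fintype

/-- The directed edges of `D_int`. -/
inductive DIntE (k N : ℕ) : DIntV k N → DIntV k N → Prop where
  /-- `w_{i,j}^{q,ℓ} → w_{i,j}^{q,ℓ+1}` for `ℓ < N` -/
  | up (i j : Fin k) (q ℓ ℓ' : Fin N) (h : (ℓ' : ℕ) = (ℓ : ℕ) + 1) :
      DIntE k N (.grid i j q ℓ) (.grid i j q ℓ')
  /-- `w_{i,j}^{q,ℓ} → w_{i,j}^{q+1,ℓ}` for `q < N` -/
  | right (i j : Fin k) (q q' ℓ : Fin N) (h : (q' : ℕ) = (q : ℕ) + 1) :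
      DIntE k N (.grid i j q ℓ) (.grid i j q' ℓ)
  /-- `w_{i,j}^{N,ℓ} → w_{i+1,j}^{1,ℓ}` for `i < k` -/
  | hmatch (i i' j : Fin k) (q q' ℓ : Fin N)
      (hi : (i' : ℕ) = (i : ℕ) + 1) (hq : (q : ℕ) + 1 = N) (hq' : (q' : ℕ) = 0) :
      DIntE k N (.grid i j q ℓ) (.grid i' j q' ℓ)
  /-- `w_{i,j}^{ℓ,N} → w_{i,j+1}^{ℓ,1}` for `j < k` -/
  | vmatch (i j j' : Fin k) (q ℓ ℓ' : Fin N)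
      (hj : (j' : ℕ) = (j : ℕ) + 1) (hl : (ℓ : ℕ) + 1 = N) (hl' : (ℓ' : ℕ) = 0) :
      DIntE k N (.grid i j q ℓ) (.grid i j' q ℓ')
  /-- `a_i → w_{i,1}^{q,1}` for all `q ∈ [N]` -/
  | srcA (i j : Fin k) (q ℓ : Fin N) (hj : (j : ℕ) = 0) (hl : (ℓ : ℕ) = 0) :
      DIntE k N (.a i) (.grid i j q ℓ)
  /-- `w_{i,k}^{q,N} → b_i` for all `q ∈ [N]` -/
  | snkB (i j : Fin k) (q ℓ : Fin N) (hj : (j : ℕ) + 1 = k) (hl : (ℓ : ℕ) + 1 = N) :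
      DIntE k N (.grid i j q ℓ) (.b i)
  /-- `c_j → w_{1,j}^{1,ℓ}` for all `ℓ ∈ [N]` -/
  | srcC (i j : Fin k) (q ℓ : Fin N) (hi : (i : ℕ) = 0) (hq : (q : ℕ) = 0) :
      DIntE k N (.c j) (.grid i j q ℓ)
  /-- `w_{k,j}^{N,ℓ} → d_j` for all `ℓ ∈ [N]` -/
  | snkD (i j : Fin k) (q ℓ : Fin N) (hi : (i : ℕ) + 1 = k) (hq : (q : ℕ) + 1 = N) :
      DIntE k N (.grid i j q ℓ) (.d j)

/-- The horizontal canonical path `Canonical(r; c_j ⇝ d_j)`, as the list of its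
vertices : `c_j`, then row `r` of the grids `D_{1,j}, …, D_{k,j}` from left to right,
then `d_j`. -/
def canonH (k N : ℕ) (j : Fin k) (r : Fin N) : List (DIntV k N) :=
  DIntV.c j ::
    (((List.finRange k).flatMap fun i =>
        (List.finRange N).map fun q => DIntV.grid i j q r) ++ [DIntV.d j])

/-- The vertical canonical path `Canonical(r; a_i ⇝ b_i)`, as the list of its
vertices : `a_i`, then column `r` of the grids `D_{i,1}, …, D_{i,k}` from bottom to top,
then `b_i`. -/
def canonV (k N : ℕ) (i : Fin k) (r : Fin N) : List (DIntV k N) :=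
  DIntV.a i ::
    (((List.finRange k).flatMap fun j =>
        (List.finRange N).map fun ℓ => DIntV.grid i j r ℓ) ++ [DIntV.b i])
/-- The adjacency relation of the undirected graph `U_int`: the symmetrization of the
edges of `D_int` (i.e. the same grid, matching and terminal edges, undirected). -/
def UIntAdj (k N : ℕ) : DIntV k N → DIntV k N → Prop := UAdj (DIntE k N)

/-- The vertex costs in `U_int`: each grid (black) vertex has cost `1`, and each
terminal (green) vertex has cost `2kN`. -/
def costInt (k N : ℕ) : DIntV k N → ℕ
  | .grid _ _ _ _ => 1
  | _ => 2 * k * N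

namespace UIntAux
open List

variable {k N : ℕ}

def gi : DIntV k N → ℕ | .grid i _ _ _ => i.val | _ => 0
def gj : DIntV k N → ℕ | .grid _ j _ _ => j.val | _ => 0
def gq : DIntV k N → ℕ | .grid _ _ q _ => q.val | _ => 0
def gl : DIntV k N → ℕ | .grid _ _ _ l => l.val | _ => 0
def isG : DIntV k N → Prop | .grid _ _ _ _ => True | _ => False

/-- global x-coordinate -/
def X (v : DIntV k N) : ℕ := gi v * N + gq v

lemma grid_repr {v : DIntV k N} (h : isG v) :
    ∃ (i j : Fin k) (q l : Fin N), v = .grid i j q l ∧ gi v = i.val ∧ gj v = j.val ∧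
      gq v = q.val ∧ gl v = l.val := by
  cases v
  case grid i j q l => exact ⟨i, j, q, l, rfl, rfl, rfl, rfl, rfl⟩
  all_goals simp [isG] at h

lemma cost_one {v : DIntV k N} (h : isG v) : costInt k N v = 1 := by
  cases v <;> simp_all [isG, costInt]

lemma cost_nonGrid {v : DIntV k N} (h : ¬ isG v) : costInt k N v = 2 * k * N := by
  cases v <;> simp_all [isG, costInt]

lemma stepA {u v : DIntV k N} (h : DIntE k N u v) (hu : isG u) (hv : isG v) :
    X v = X u ∨ (X v = X u + 1 ∧ gj v = gj u ∧ gl v = gl u) := by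
  cases h <;> simp_all [X, gi, gq, gj, gl, isG, add_mul] <;> omega

lemma ustepA {u v : DIntV k N} (h : UAdj (DIntE k N) u v) (hu : isG u) (hv : isG v) :
    X v ≤ X u + 1 := by
  rcases h with h | h
  · rcases stepA h hu hv with h' | ⟨h', -⟩ <;> omega
  · rcases stepA h hv hu with h' | ⟨h', -⟩ <;> omega

lemma ustepB {u v : DIntV k N} (h : UAdj (DIntE k N) u v) (hu : isG u) (hv : isG v)
    (hx : X v = X u + 1) : gj v = gj u ∧ gl v = gl u := by
  rcases h with h | h
  · rcases stepA h hu hv with h' | ⟨-, h'⟩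
    · omega
    · exact h'
  · rcases stepA h hv hu with h' | ⟨h', -⟩ <;> omega

lemma cEdge {v : DIntV k N} {j : Fin k} (h : UAdj (DIntE k N) (.c j) v) :
    isG v ∧ gi v = 0 ∧ gq v = 0 ∧ gj v = j.val := by
  rcases h with h | h <;> cases h <;> simp_all [isG, gi, gq, gj]

lemma dEdge {v : DIntV k N} {j : Fin k} (h : UAdj (DIntE k N) v (.d j)) :
    isG v ∧ gi v + 1 = k ∧ gq v + 1 = N ∧ gj v = j.val := by
  rcases h with h | h <;> cases h <;> simp_all [isG, gi, gq, gj]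

lemma no_cd {j j' : Fin k} (h : UAdj (DIntE k N) (.c j) (.d j')) : False := by
  rcases h with h | h <;> cases h

lemma sum_ones {l : List (DIntV k N)} (h : ∀ v ∈ l, isG v) :
    (l.map (costInt k N)).sum = l.length := by
  induction l with
  | nil => simp
  | cons a t ih =>
    have ha : isG a := h a mem_cons_self
    rw [map_cons, sum_cons, cost_one ha, ih (fun v hv => h v (mem_cons_of_mem _ hv))]
    simp [add_comm]

lemma chain_bound {V : Type*} (f : V → ℕ) (m : List V)
    (hR : ∀ (n : ℕ) (h : n + 1 < m.length), f (m[n+1]) ≤ f (m[n]'(by omega)) + 1) :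
    ∀ (a b : ℕ), ∀ (hab : a ≤ b) (hb : b < m.length),
      f m[b] ≤ f (m[a]'(by omega)) + (b - a) := by
  intro a b
  induction b with
  | zero =>
    intro hab hb
    have : a = 0 := by omega
    subst this; simp
  | succ t ih =>
    intro hab hb
    rcases Nat.eq_or_lt_of_le hab with rfl | hlt
    · simp
    · have h1 := ih (by omega) (by omega)
      have h2 := hR t (by omega)
      omega

lemma divmod_unique {i q : ℕ} (hq : q < N) :
    (i * N + q) / N = i ∧ (i * N + q) % N = q := by
  have hN : 0 < N := by omega
  constructor
  · rw [mul_comm, Nat.mul_add_div hN, Nat.div_eq_of_lt hq]; omega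
  · rw [mul_comm, Nat.mul_add_mod, Nat.mod_eq_of_lt hq]

lemma getElem_flatMap_map {α V : Type*} (g : α → Fin N → V) (L : List α) :
    ∀ (n : ℕ) (h1 : n < (L.flatMap fun i => (List.finRange N).map fun q => g i q).length)
      (h2 : n / N < L.length) (h3 : n % N < N),
      (L.flatMap fun i => (List.finRange N).map fun q => g i q)[n] = g L[n/N] ⟨n % N, h3⟩ := by
  induction L with
  | nil => intro n h1 h2 h3; simp at h2
  | cons a L ih =>
    intro n h1 h2 h3
    have hN : 0 < N := by omega
    simp only [flatMap_cons]
    by_cases hn : n < N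
    · have hdiv : n / N = 0 := Nat.div_eq_of_lt hn
      have hmod : n % N = n := Nat.mod_eq_of_lt hn
      rw [getElem_append_left (by simpa using hn)]
      simp only [getElem_map, List.getElem_finRange, hdiv, getElem_cons_zero]
      congr 1
      exact Fin.ext (by simpa using hmod.symm)
    · have hn' : N ≤ n := le_of_not_gt hn
      have hL : ((List.finRange N).map fun q => g a q).length = N := by simp
      rw [getElem_append_right (by simpa [hL] using hn')]
      have hdiv : n / N = (n - N) / N + 1 := Nat.div_eq_sub_div hN hn'
      have hmod : n % N = (n - N) % N := Nat.mod_eq_sub_mod hn'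
      have h1' : n - N < (L.flatMap fun i => (List.finRange N).map fun q => g i q).length := by
        simp only [flatMap_cons, length_append, length_map, length_finRange] at h1
        omega
      have h2' : (n - N) / N < L.length := by
        simp only [length_cons] at h2; omega
      have h3' : (n - N) % N < N := Nat.mod_lt _ hN
      have := ih (n - N) h1' h2' h3'
      simp only [length_map, length_finRange]
      rw [this]
      simp only [hdiv, hmod, getElem_cons_succ]

/-- the middle part of the horizontal canonical path -/
def Mid (k N : ℕ) (j : Fin k) (r : Fin N) : List (DIntV k N) :=
  (List.finRange k).flatMap fun i => (List.finRange N).map fun q => DIntV.grid i j q r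

lemma canonH_eq (j : Fin k) (r : Fin N) :
    canonH k N j r = DIntV.c j :: (Mid k N j r ++ [DIntV.d j]) := rfl

lemma length_Mid (j : Fin k) (r : Fin N) : (Mid k N j r).length = k * N := by
  simp only [Mid, length_flatMap, Function.comp_def, length_map, length_finRange]
  rw [List.map_const', sum_replicate, smul_eq_mul, length_finRange, mul_comm]

lemma getElem_Mid (j : Fin k) (r : Fin N) (n : ℕ) (h2 : n / N < k) (h3 : n % N < N)
    (h1 : n < (Mid k N j r).length) :
    (Mid k N j r)[n] = DIntV.grid ⟨n / N, h2⟩ j ⟨n % N, h3⟩ r := by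
  have := getElem_flatMap_map (fun i q => DIntV.grid i j q r) (List.finRange k) n
    (by simpa [Mid] using h1) (by simpa using h2) h3
  simp only [Mid] at *
  rw [this]
  congr 1
  rw [List.getElem_finRange]
  exact Fin.ext (by simp)

lemma mem_Mid {j : Fin k} {r : Fin N} {v : DIntV k N} (h : v ∈ Mid k N j r) :
    ∃ i q, v = DIntV.grid i j q r := by
  simp only [Mid, mem_flatMap, mem_map, mem_finRange, true_and] at h
  obtain ⟨i, q, -, rfl⟩ := h
  exact ⟨i, q, rfl⟩


section Canon
variable {k N : ℕ}

lemma divmod_succ_lt {n : ℕ} (hN : 0 < N) (hc : n % N + 1 < N) :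
    (n + 1) / N = n / N ∧ (n + 1) % N = n % N + 1 := by
  have hdm := Nat.div_add_mod n N
  constructor
  · rw [show n + 1 = N * (n / N) + (n % N + 1) by omega, Nat.mul_add_div hN,
      Nat.div_eq_of_lt hc]
    omega
  · rw [show n + 1 = N * (n / N) + (n % N + 1) by omega, Nat.mul_add_mod,
      Nat.mod_eq_of_lt hc]

lemma divmod_succ_eq {n : ℕ} (hN : 0 < N) (hc : n % N + 1 = N) :
    (n + 1) / N = n / N + 1 ∧ (n + 1) % N = 0 := by
  have hdm := Nat.div_add_mod n N
  have hmn : N * (n / N + 1) = N * (n / N) + N := by ring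
  constructor
  · rw [show n + 1 = N * (n / N + 1) by omega, Nat.mul_div_cancel_left _ hN]
  · rw [show n + 1 = N * (n / N + 1) by omega, Nat.mul_mod_right]

lemma div_lt_k {n : ℕ} (hN : 0 < N) (h : n < k * N) : n / N < k := by
  rw [Nat.div_lt_iff_lt_mul hN]; omega

lemma last_divmod (hN : 0 < N) (hk : 0 < k) :
    (k * N - 1) / N = k - 1 ∧ (k * N - 1) % N = N - 1 := by
  have hkN : N * (k - 1) + N = k * N := by
    cases k with
    | zero => omega
    | succ k' => simp only [Nat.succ_sub_one]; ring
  constructor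
  · rw [show k * N - 1 = N * (k - 1) + (N - 1) by omega, Nat.mul_add_div hN,
      Nat.div_eq_of_lt (by omega)]
    omega
  · rw [show k * N - 1 = N * (k - 1) + (N - 1) by omega, Nat.mul_add_mod,
      Nat.mod_eq_of_lt (by omega)]

lemma Mid_chain (hN : 0 < N) (j : Fin k) (r : Fin N) :
    (Mid k N j r).Chain' (DIntE k N) := by
  rw [List.Chain', List.isChain_iff_getElem]
  intro n hlt
  have hlen : (Mid k N j r).length = k * N := length_Mid j r
  have h1 : n < k * N := by omega
  have h2 : n + 1 < k * N := by omega
  have hd1 : n / N < k := div_lt_k hN h1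
  have hd2 : (n + 1) / N < k := div_lt_k hN h2
  have hm1 : n % N < N := Nat.mod_lt _ hN
  have hm2 : (n + 1) % N < N := Nat.mod_lt _ hN
  rw [getElem_Mid j r n hd1 hm1 (by omega), getElem_Mid j r (n+1) hd2 hm2 (by omega)]
  by_cases hc : n % N + 1 < N
  · obtain ⟨e1, e2⟩ := divmod_succ_lt hN hc
    have hi : (⟨(n+1)/N, hd2⟩ : Fin k) = ⟨n/N, hd1⟩ := Fin.ext e1
    rw [hi]
    exact DIntE.right _ _ _ _ _ (by simpa using e2)
  · have hc' : n % N + 1 = N := by omega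
    obtain ⟨e1, e2⟩ := divmod_succ_eq hN hc'
    exact DIntE.hmatch _ _ _ _ _ _ (by simpa using e1) (by simpa using hc')
      (by simpa using e2)

lemma Mid_nodup (hN : 0 < N) (j : Fin k) (r : Fin N) : (Mid k N j r).Nodup := by
  rw [List.nodup_iff_injective_get]
  rintro ⟨n, hn⟩ ⟨n', hn'⟩ h
  simp only [List.get_eq_getElem] at h
  have hlen : (Mid k N j r).length = k * N := length_Mid j r
  rw [getElem_Mid j r n (div_lt_k hN (by omega)) (Nat.mod_lt _ hN) hn,
    getElem_Mid j r n' (div_lt_k hN (by omega)) (Nat.mod_lt _ hN) hn'] at h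
  simp only [DIntV.grid.injEq, Fin.mk.injEq] at h
  have hdm := Nat.div_add_mod n N
  have hdm' := Nat.div_add_mod n' N
  have e1 : n / N = n' / N := h.1
  have e2 : n % N = n' % N := h.2.2.1
  rw [← e1, ← e2] at hdm'
  simp only [Fin.mk.injEq]
  omega

lemma Mid_head (hN : 0 < N) (hk : 0 < k) (j : Fin k) (r : Fin N)
    (h : 0 < (Mid k N j r).length) :
    (Mid k N j r)[0] = DIntV.grid ⟨0, hk⟩ j ⟨0, hN⟩ r := by
  rw [getElem_Mid j r 0 (by simpa using hk) (by simpa using hN) h]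
  congr 1 <;> exact Fin.ext (by simp)

lemma Mid_last (hN : 0 < N) (hk : 0 < k) (j : Fin k) (r : Fin N)
    (h : k * N - 1 < (Mid k N j r).length) :
    (Mid k N j r)[k * N - 1] = DIntV.grid ⟨k - 1, by omega⟩ j ⟨N - 1, by omega⟩ r := by
  obtain ⟨e1, e2⟩ := last_divmod (k := k) hN hk
  rw [getElem_Mid j r _ (by omega) (Nat.mod_lt _ hN) h]
  congr 1 <;> exact Fin.ext (by simp [e1, e2])

lemma Mid_ne_nil (hN : 0 < N) (hk : 0 < k) (j : Fin k) (r : Fin N) :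
    Mid k N j r ≠ [] := by
  have := length_Mid (N := N) j r
  intro h
  rw [h] at this
  simp at this
  omega

lemma canonH_isPath (hN : 0 < N) (hk : 0 < k) (j : Fin k) (r : Fin N) :
    IsPathList (UAdj (DIntE k N)) (.c j) (.d j) (canonH k N j r) := by
  have hlen : (Mid k N j r).length = k * N := length_Mid j r
  have hpos : 0 < (Mid k N j r).length := by
    rw [hlen]; positivity
  constructor
  · -- chain
    rw [canonH_eq, List.Chain', List.isChain_cons, List.isChain_append]
    refine ⟨?_, ?_, by simp, ?_⟩
    · intro y hy
      rw [List.head?_append_of_ne_nil _ (Mid_ne_nil hN hk j r)] at hy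
      rw [List.head?_eq_head (Mid_ne_nil hN hk j r)] at hy
      rw [List.head_eq_getElem] at hy
      rw [Mid_head hN hk j r (by omega)] at hy
      cases hy
      exact Or.inl (DIntE.srcC _ _ _ r rfl rfl)
    · exact List.IsChain.imp (fun a b h => Or.inl h) (Mid_chain hN j r)
    · intro x hx y hy
      simp only [List.head?_cons, Option.mem_def, Option.some.injEq] at hy
      subst hy
      rw [List.getLast?_eq_getLast (Mid_ne_nil hN hk j r)] at hx
      simp only [Option.mem_def, Option.some.injEq] at hx
      simp only [List.getLast_eq_getElem, hlen] at hx
      rw [Mid_last hN hk j r (by omega)] at hx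
      subst hx
      exact Or.inl (DIntE.snkD _ _ _ r (by simp; omega) (by simp; omega))
  · -- nodup
    rw [canonH_eq]
    refine List.nodup_cons.mpr ⟨?_, ?_⟩
    · intro h
      rcases List.mem_append.mp h with h | h
      · obtain ⟨i, q, h⟩ := mem_Mid h; cases h
      · simp at h
    · refine List.nodup_append.mpr ⟨Mid_nodup hN j r, by simp, ?_⟩
      intro x hx
      obtain ⟨i, q, rfl⟩ := mem_Mid hx
      simp
  · rfl
  · rw [canonH_eq, ← List.cons_append]
    exact List.getLast?_concat

lemma canonH_cost (j : Fin k) (r : Fin N) :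
    pathCost (costInt k N) (canonH k N j r) = 5 * (k * N) := by
  have hsum : ((Mid k N j r).map (costInt k N)).sum = k * N := by
    rw [sum_ones, length_Mid]
    intro v hv
    obtain ⟨i, q, rfl⟩ := mem_Mid hv
    trivial
  rw [canonH_eq]
  simp only [pathCost, map_cons, map_append, sum_cons, sum_append, map_nil, hsum]
  simp [costInt]
  ring

end Canon

end UIntAux

set_option maxHeartbeats 1000000 in
/-- for every `j ∈ [k]`, every shortest (minimum-cost) `c_j`–`d_j` path in
`U_int` equals the horizontal canonical path `Canonical(ℓ; c_j–d_j)` for some `ℓ ∈ [N]`. -/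
theorem UInt_shortest_is_canonH (N k : ℕ) (hN : 1 ≤ N) (hk : 1 ≤ k) (j : Fin k)
    (p : List (DIntV k N))
    (hp : IsShortestCostPath (DIntE k N) (costInt k N) (DIntV.c j) (DIntV.d j) p) :
    ∃ ℓ : Fin N, p = canonH k N j ℓ := by
  classical
  open UIntAux List in
  obtain ⟨hpath, hmin⟩ := hp
  have hN0 : 0 < N := hN
  have hk0 : 0 < k := hk
  have hkN : 0 < k * N := Nat.mul_pos hk0 hN0
  -- decompose p = c :: (m ++ [d])
  obtain ⟨t, rfl⟩ : ∃ t, p = DIntV.c j :: t := by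
    cases p with
    | nil => simpa using hpath.head
    | cons a t =>
      have h := hpath.head
      simp only [List.head?_cons, Option.some.injEq] at h
      exact ⟨t, by rw [h]⟩
  have hne : t ≠ [] := by
    rintro rfl
    have h := hpath.last
    simp at h
  obtain ⟨m, rfl⟩ : ∃ m, t = m ++ [DIntV.d j] := by
    have h := hpath.last
    rw [List.getLast?_eq_getLast (by simp)] at h
    simp only [Option.some.injEq] at h
    rw [List.getLast_cons hne] at h
    exact ⟨t.dropLast, by rw [← h]; exact (List.dropLast_append_getLast hne).symm⟩
  -- cost bound through the canonical path
  have hcost := hmin (canonH k N j ⟨0, hN0⟩) (canonH_isPath hN0 hk0 j _)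
  rw [canonH_cost] at hcost
  have hpc : pathCost (costInt k N) (DIntV.c j :: (m ++ [DIntV.d j])) =
      2 * (k * N) + (((m.map (costInt k N)).sum) + 2 * (k * N)) := by
    simp only [pathCost, List.map_cons, List.map_append, List.sum_cons, List.sum_append,
      List.map_nil, List.sum_nil, List.map_cons, List.sum_cons]
    have h1 : costInt k N (DIntV.c j) = 2 * k * N := rfl
    have h2 : costInt k N (DIntV.d j) = 2 * k * N := rfl
    rw [h1, h2]; ring
  rw [hpc] at hcost
  -- every intermediate vertex is a grid vertex
  have hgrid : ∀ v ∈ m, isG v := by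
    intro v hv
    by_contra hng
    have h2 : 2 * (k * N) ≤ (m.map (costInt k N)).sum := by
      have := List.single_le_sum (l := m.map (costInt k N)) (fun x _ => Nat.zero_le x)
        (costInt k N v) (List.mem_map_of_mem hv)
      rw [cost_nonGrid hng, mul_assoc] at this
      exact this
    omega
  have hsum : (m.map (costInt k N)).sum = m.length := sum_ones hgrid
  have hmlenle : m.length ≤ k * N := by omega
  -- chain structure
  have hplen2 : (DIntV.c j :: (m ++ [DIntV.d j])).length = m.length + 2 := by simp
  have hchain := List.isChain_iff_getElem.mp hpath.chain
  have pgetmid : ∀ (t : ℕ) (h : t < m.length)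
      (h' : t + 1 < (DIntV.c j :: (m ++ [DIntV.d j])).length),
      (DIntV.c j :: (m ++ [DIntV.d j]))[t+1] = m[t] := by
    intro t h h'
    rw [List.getElem_cons_succ, List.getElem_append_left h]
  have pgetD : ∀ (t : ℕ) (h : t = m.length)
      (h' : t + 1 < (DIntV.c j :: (m ++ [DIntV.d j])).length),
      (DIntV.c j :: (m ++ [DIntV.d j]))[t+1] = DIntV.d j := by
    intro t h h'
    rw [List.getElem_cons_succ, List.getElem_append_right (by omega)]
    simp
  have hm0 : 0 < m.length := by
    rcases List.eq_nil_or_concat m with rfl | -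
    · have h := hchain 0 (by omega)
      simp only [List.nil_append, List.getElem_cons_zero, List.getElem_cons_succ,
        List.getElem_singleton] at h
      exact absurd h no_cd
    · by_contra h
      have : m = [] := by simpa using h
      subst this
      have h := hchain 0 (by omega)
      simp only [List.nil_append, List.getElem_cons_zero, List.getElem_cons_succ,
        List.getElem_singleton] at h
      exact absurd h no_cd
  obtain ⟨L', hLm⟩ : ∃ L', m.length = L' + 1 := ⟨m.length - 1, by omega⟩
  have e0 : UAdj (DIntE k N) (DIntV.c j) (m[0]'hm0) := by
    have h := hchain 0 (by omega)
    rwa [pgetmid 0 hm0 (by omega)] at h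
  have estep : ∀ (t : ℕ) (ht : t + 1 < m.length),
      UAdj (DIntE k N) (m[t]'(by omega)) (m[t+1]'ht) := by
    intro t ht
    have h := hchain (t+1) (by omega)
    rwa [pgetmid t (by omega) (by omega), pgetmid (t+1) ht (by omega)] at h
  have eL : UAdj (DIntE k N) (m[L']'(by omega)) (DIntV.d j) := by
    have h := hchain (L'+1) (by omega)
    rwa [pgetmid L' (by omega) (by omega), pgetD (L'+1) (by omega) (by omega)] at h
  -- X coordinates
  have hstepR : ∀ (n : ℕ) (h : n + 1 < m.length),
      X (m[n+1]) ≤ X (m[n]'(by omega)) + 1 := fun n h =>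
    ustepA (estep n h) (hgrid _ (List.getElem_mem _)) (hgrid _ (List.getElem_mem _))
  have hcb := chain_bound X m hstepR
  have hX0 : X (m[0]'hm0) = 0 := by
    obtain ⟨-, h1, h2, -⟩ := cEdge e0
    simp [X, h1, h2]
  have hXL : X (m[L']'(by omega)) = k * N - 1 := by
    obtain ⟨hg, h1, h2, -⟩ := dEdge eL
    have hmm : k * N = (gi (m[L']'(by omega)) + 1) * N := by rw [h1]
    have hmm2 : (gi (m[L']'(by omega)) + 1) * N = gi (m[L']'(by omega)) * N + N := by ring
    simp only [X]
    omega
  have hXn : ∀ (n : ℕ) (h : n < m.length), X m[n] = n := by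
    intro n h
    have h1 := hcb 0 n (Nat.zero_le _) h
    have h2 := hcb n L' (by omega) (by omega)
    rw [hX0] at h1
    rw [hXL] at h2
    omega
  have hLen : m.length = k * N := by
    have h := hXn L' (by omega)
    rw [hXL] at h
    omega
  -- row and column coordinates are constant
  have hjl : ∀ (n : ℕ) (h : n < m.length),
      gj m[n] = j.val ∧ gl m[n] = gl (m[0]'hm0) := by
    intro n
    induction n with
    | zero => intro h; exact ⟨(cEdge e0).2.2.2, rfl⟩
    | succ t ih =>
      intro h
      have ht : t < m.length := by omega
      have hx : X (m[t+1]) = X (m[t]'ht) + 1 := by rw [hXn (t+1) h, hXn t ht]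
      obtain ⟨hj', hl'⟩ := ustepB (estep t h) (hgrid _ (List.getElem_mem _))
        (hgrid _ (List.getElem_mem _)) hx
      obtain ⟨hj'', hl''⟩ := ih ht
      exact ⟨hj'.trans hj'', hl'.trans hl''⟩
  have hg0 : isG (m[0]'hm0) := hgrid _ (List.getElem_mem _)
  have hr0 : gl (m[0]'hm0) < N := by
    obtain ⟨-, -, -, l0, -, -, -, -, hl0⟩ := grid_repr hg0
    rw [hl0]; exact l0.isLt
  refine ⟨⟨gl (m[0]'hm0), hr0⟩, ?_⟩
  have hclen : (canonH k N j ⟨gl (m[0]'hm0), hr0⟩).length = k * N + 2 := by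
    rw [canonH_eq]
    simp only [List.length_cons, List.length_append, List.length_singleton, length_Mid,
      List.length_nil]
  apply List.ext_getElem
  · simp only [List.length_cons, List.length_append, List.length_singleton, hclen, hLen,
      List.length_nil]
  · intro n h1 h2
    have hMlen : (Mid k N j ⟨gl (m[0]'hm0), hr0⟩).length = k * N :=
      length_Mid j _
    rcases n with _ | t
    · simp only [canonH_eq]
      simp
    · simp only [canonH_eq]
      by_cases htm : t < m.length
      · rw [pgetmid t htm h1, List.getElem_cons_succ,
          List.getElem_append_left (by omega)]
        have hg := hgrid _ (List.getElem_mem (show t < m.length from htm))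
        obtain ⟨i1, j1, q1, l1, hv, hgi, hgj, hgq, hgl⟩ := grid_repr hg
        have hXt := hXn t htm
        simp only [X] at hXt
        obtain ⟨hj1, hl1⟩ := hjl t htm
        have hiq : i1.val * N + q1.val = t := by rw [← hgi, ← hgq]; exact hXt
        obtain ⟨hdiv, hmod⟩ := divmod_unique (i := i1.val) (q := q1.val) q1.isLt
        rw [hiq] at hdiv hmod
        rw [getElem_Mid j _ t (div_lt_k hN0 (by omega)) (Nat.mod_lt _ hN0) (by omega)]
        refine hv.trans ?_
        simp only [DIntV.grid.injEq]
        refine ⟨Fin.ext ?_, Fin.ext ?_, Fin.ext ?_, Fin.ext ?_⟩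
        · simpa using hdiv.symm
        · rw [← hgj]; exact hj1
        · simpa using hmod.symm
        · rw [← hgl]; exact hl1
      · have htm' : t = m.length := by omega
        rw [pgetD t htm' h1, List.getElem_cons_succ,
          List.getElem_append_right (by omega)]
        simp
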